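/- Let K be a field of characteristic ≠ 2 containing a square root of −1, let n ≥ 2 be even, and let a₁, …, a_n ∈ Kˣ with a₁⋯a_n = 1 (up to squares). Then the form ⟨a₁, …, a_n⟩ is Witt-equivalent to the sum of the n−2 two-fold Pfister forms ⟨⟨a_i, a₁a₂⋯a_{i−1}⟩⟩ for i = 2, …, n−1. In particular, every n-dimensional form lying in I²(K) is a sum of at most n−2 two-fold Pfister forms in W(K). -/

import Mathlib

open QuadraticMap

section Helpers

variable {K : Type*} [Field K]

private theorem wss_reindex {ι ι' : Type*} [Fintype ι] [Fintype ι'] (e : ι ≃ ι')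
    (w : ι → K) (w' : ι' → K) (h : ∀ i, w i = w' (e i)) :
    QuadraticMap.Equivalent (weightedSumSquares K w) (weightedSumSquares K w') := by
  refine ⟨{ toLinearEquiv := LinearEquiv.funCongrLeft K K e.symm, map_app' := ?_ }⟩
  intro v
  simp only [LinearEquiv.funCongrLeft_apply, LinearMap.funLeft_apply, weightedSumSquares_apply]
  exact (Fintype.sum_equiv e _ _ (fun i => by simp [h i])).symm

private theorem wss_scale {ι : Type*} [Fintype ι] (w w' : ι → K) (c : ι → K)
    (hc : ∀ i, c i ≠ 0) (h : ∀ i, w' i = c i ^ 2 * w i) :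
    QuadraticMap.Equivalent (weightedSumSquares K w) (weightedSumSquares K w') := by
  refine ⟨{ toLinearEquiv := (LinearEquiv.piCongrRight
      fun i => LinearEquiv.smulOfNeZero K K ((c i)⁻¹) (inv_ne_zero (hc i))), map_app' := ?_ }⟩
  intro v
  simp only [weightedSumSquares_apply, LinearEquiv.piCongrRight_apply]
  refine Finset.sum_congr rfl fun i _ => ?_
  show w' i • ((c i)⁻¹ • v i * (c i)⁻¹ • v i) = w i • (v i * v i)
  rw [h i]
  have := hc i
  field_simp
  linear_combination (v i ^ 2 * w i * (c i * (c i)⁻¹ + 1)) * mul_inv_cancel₀ this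

private theorem wss_sum_split {ι ι' : Type*} [Fintype ι] [Fintype ι'] (w : ι ⊕ ι' → K) :
    QuadraticMap.Equivalent (weightedSumSquares K w)
      ((weightedSumSquares K (w ∘ Sum.inl)).prod (weightedSumSquares K (w ∘ Sum.inr))) := by
  refine ⟨{ toLinearEquiv := LinearEquiv.sumArrowLequivProdArrow ι ι' K K, map_app' := ?_ }⟩
  intro v
  simp only [QuadraticMap.prod_apply, weightedSumSquares_apply]
  rw [Fintype.sum_sum_type]
  simp [LinearEquiv.sumArrowLequivProdArrow]

private theorem wss_hyp (h2 : (2:K) ≠ 0) {x : K} (hx : x ≠ 0) :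
    QuadraticMap.Equivalent (weightedSumSquares K ![x, -x])
      (weightedSumSquares K ![(1:K), -1]) := by
  refine ⟨{ toFun := fun v => ![(x+1)/2 * v 0 + (x-1)/2 * v 1, (x-1)/2 * v 0 + (x+1)/2 * v 1],
            invFun := fun v => ![((x+1)/2 * v 0 - (x-1)/2 * v 1)/x,
              (-((x-1)/2) * v 0 + (x+1)/2 * v 1)/x],
            map_add' := ?_, map_smul' := ?_, left_inv := ?_, right_inv := ?_,
            map_app' := ?_ }⟩
  · intro u v; funext j
    fin_cases j <;> simp <;> ring
  · intro c v; funext j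
    fin_cases j <;> simp <;> ring
  · intro v; funext j
    fin_cases j <;>
    · simp only [Fin.zero_eta, Fin.mk_one, Matrix.cons_val_zero, Matrix.cons_val_one, Matrix.head_cons]
      field_simp
      ring
  · intro v; funext j
    fin_cases j <;>
    · simp only [Fin.zero_eta, Fin.mk_one, Matrix.cons_val_zero, Matrix.cons_val_one, Matrix.head_cons]
      field_simp
      ring
  · intro v
    simp only [weightedSumSquares_apply, Fin.sum_univ_two, smul_eq_mul,
      Matrix.cons_val_zero, Matrix.cons_val_one, Matrix.head_cons]
    field_simp
    ring

private theorem wss_pair (h2 : (2:K) ≠ 0) {i : K} (hi : i ^ 2 = -1) {x : K} (hx : x ≠ 0) :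
    QuadraticMap.Equivalent (weightedSumSquares K (fun _ : Fin 2 => x))
      (weightedSumSquares K (fun _ : Fin 2 => (1:K))) := by
  have hine : i ≠ 0 := by
    rintro rfl
    rw [zero_pow (by norm_num)] at hi
    exact one_ne_zero (neg_eq_zero.mp hi.symm)
  have e1 : QuadraticMap.Equivalent (weightedSumSquares K (fun _ : Fin 2 => x))
      (weightedSumSquares K ![x, -x]) := by
    refine wss_scale _ _ ![1, i] ?_ ?_
    · intro j; fin_cases j <;> simp [hine]
    · intro j; fin_cases j <;> simp [hi]
  have e3 : QuadraticMap.Equivalent (weightedSumSquares K ![(1:K), -1])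
      (weightedSumSquares K (fun _ : Fin 2 => (1:K))) := by
    refine wss_scale _ _ ![1, i] ?_ ?_
    · intro j; fin_cases j <;> simp [hine]
    · intro j; fin_cases j <;> simp [hi]
  exact (e1.trans (wss_hyp h2 hx)).trans e3

noncomputable abbrev dform (l : List K) : QuadraticMap K (Fin l.length → K) K :=
  weightedSumSquares K l.get

private theorem dform_append (l₁ l₂ : List K) :
    QuadraticMap.Equivalent (dform (l₁ ++ l₂)) ((dform l₁).prod (dform l₂)) := by
  refine ((wss_reindex (finSumFinEquiv.trans (finCongr (List.length_append (as := l₁) (bs := l₂)).symm))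
    (Sum.elim l₁.get l₂.get) (l₁ ++ l₂).get ?_).symm).trans (wss_sum_split _)
  rintro (j | j)
  · show l₁.get j = (l₁ ++ l₂).get (finCongr (List.length_append (as := l₁) (bs := l₂)).symm (finSumFinEquiv (Sum.inl j)))
    simp only [finSumFinEquiv_apply_left, finCongr_apply, List.get_eq_getElem,
      Fin.coe_cast, Fin.coe_castAdd]
    exact (List.getElem_append_left j.isLt).symm
  · show l₂.get j = (l₁ ++ l₂).get (finCongr (List.length_append (as := l₁) (bs := l₂)).symm (finSumFinEquiv (Sum.inr j)))
    simp only [finSumFinEquiv_apply_right, finCongr_apply, List.get_eq_getElem,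
      Fin.coe_cast, Fin.coe_natAdd]
    rw [List.getElem_append_right (by omega)]
    congr 1
    omega

private theorem dform_perm {l l' : List K} (h : l.Perm l') :
    QuadraticMap.Equivalent (dform l) (dform l') := by
  induction h with
  | nil => exact QuadraticMap.Equivalent.refl _
  | cons x h ih =>
      exact (dform_append [x] _).trans
        (((QuadraticMap.Equivalent.refl (dform [x])).prod ih).trans (dform_append [x] _).symm)
  | swap x y l =>
      refine (dform_append [y, x] l).trans (QuadraticMap.Equivalent.trans ?_
        (dform_append [x, y] l).symm)
      refine (wss_reindex (Equiv.swap (⟨0, by norm_num⟩ : Fin [y,x].length) ⟨1, by norm_num⟩)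
        _ _ ?_).prod (QuadraticMap.Equivalent.refl _)
      intro i
      fin_cases i <;> rfl
  | trans _ _ ih₁ ih₂ => exact ih₁.trans ih₂

private theorem dform_scale_head {x y c : K} (hc : c ≠ 0) (hxy : x = c ^ 2 * y) (l : List K) :
    QuadraticMap.Equivalent (dform (y :: l)) (dform (x :: l)) := by
  refine wss_scale _ _ (fun i => if (i : ℕ) = 0 then c else 1) ?_ ?_
  · intro i
    split <;> simp [hc]
  · intro i
    refine Fin.cases ?_ (fun j => ?_) i <;> simp [hxy]

private theorem dform_pair_cons (h2 : (2:K) ≠ 0) {i : K} (hi : i ^ 2 = -1) {x : K} (hx : x ≠ 0)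
    (l : List K) :
    QuadraticMap.Equivalent (dform (x :: x :: l)) (dform ((1:K) :: 1 :: l)) := by
  refine (dform_append [x, x] l).trans (QuadraticMap.Equivalent.trans ?_
    (dform_append [(1:K), 1] l).symm)
  refine QuadraticMap.Equivalent.prod (QuadraticMap.Equivalent.trans ?_
    (QuadraticMap.Equivalent.trans (wss_pair h2 hi hx) ?_)) (QuadraticMap.Equivalent.refl _)
  · exact wss_reindex (Equiv.refl _) _ _ (fun j => by fin_cases j <;> rfl)
  · exact wss_reindex (Equiv.refl _) _ _ (fun j => by fin_cases j <;> rfl)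

private theorem wss_empty_prod {ι M : Type*} [Fintype ι] [IsEmpty ι] [AddCommGroup M] [Module K M]
    (w : ι → K) (Q : QuadraticMap K M K) :
    QuadraticMap.Equivalent ((weightedSumSquares K w).prod Q) Q := by
  refine ⟨{ toFun := Prod.snd, invFun := fun m => (fun j => isEmptyElim j, m),
            map_add' := fun _ _ => rfl, map_smul' := fun _ _ => rfl,
            left_inv := ?_, right_inv := fun m => rfl, map_app' := ?_ }⟩
  · intro p
    ext
    · exact congrFun (Subsingleton.elim _ _) _
    · rfl
  · intro p
    show Q p.2 = weightedSumSquares K w p.1 + Q p.2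
    rw [weightedSumSquares_apply]
    simp

private theorem wss_ones_dform (N : ℕ) :
    QuadraticMap.Equivalent (weightedSumSquares K (fun _ : Fin N => (1:K)))
      (dform (List.replicate N (1:K))) := by
  refine wss_reindex (finCongr (List.length_replicate (n := N) (a := (1:K))).symm) _ _ ?_
  intro j
  simp

private theorem wss_signs_dform {i : K} (hi : i ^ 2 = -1) (N : ℕ) :
    QuadraticMap.Equivalent (weightedSumSquares K (fun j : Fin N => ((-1:K) ^ (j : ℕ))))
      (dform (List.replicate N (1:K))) := by
  refine QuadraticMap.Equivalent.trans ?_ (wss_ones_dform N)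
  refine wss_scale _ _ (fun j => i ^ (j : ℕ)) ?_ ?_
  · intro j
    refine pow_ne_zero _ ?_
    rintro rfl
    rw [zero_pow (by norm_num)] at hi
    exact one_ne_zero (neg_eq_zero.mp hi.symm)
  · intro j
    show (1:K) = (i ^ (j:ℕ)) ^ 2 * (-1) ^ (j:ℕ)
    rw [← pow_mul, mul_comm (j:ℕ) 2, pow_mul, hi, ← mul_pow]
    simp

private theorem wss_ofFn_dform {n : ℕ} (f : Fin n → K) :
    QuadraticMap.Equivalent (weightedSumSquares K f) (dform (List.ofFn f)) := by
  refine wss_reindex (finCongr (List.length_ofFn (f := f)).symm) _ _ ?_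
  intro j
  simp [List.get_ofFn]

private theorem ofFnA_succ (a : ℕ → K) (N : ℕ) :
    List.ofFn (fun t : Fin (N+1) => a ((t:ℕ)+1)) =
      List.ofFn (fun t : Fin N => a ((t:ℕ)+1)) ++ [a (N+1)] := by
  rw [List.ofFn_succ']
  simp [Function.comp_def, List.concat_eq_append]

end Helpers

section Core

variable {K : Type*} [Field K]

private theorem wss_block_split (a : ℕ → K) (j : ℕ) :
    QuadraticMap.Equivalent
      (weightedSumSquares K (fun p : Fin (j+1) × Fin 4 =>
        ![1, a ((p.1:ℕ) + 2), ∏ t ∈ Finset.Icc 1 ((p.1:ℕ)+1), a t,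
          ∏ t ∈ Finset.Icc 1 ((p.1:ℕ)+2), a t] p.2))
      ((weightedSumSquares K (fun p : Fin j × Fin 4 =>
        ![1, a ((p.1:ℕ) + 2), ∏ t ∈ Finset.Icc 1 ((p.1:ℕ)+1), a t,
          ∏ t ∈ Finset.Icc 1 ((p.1:ℕ)+2), a t] p.2)).prod
       (weightedSumSquares K (fun s : Fin 4 =>
        ![1, a (j + 2), ∏ t ∈ Finset.Icc 1 (j+1), a t,
          ∏ t ∈ Finset.Icc 1 (j+2), a t] s))) := by
  refine QuadraticMap.Equivalent.trans (wss_reindex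
      ((Equiv.prodCongr finSumFinEquiv.symm (Equiv.refl (Fin 4))).trans
        ((Equiv.sumProdDistrib (Fin j) (Fin 1) (Fin 4)).trans
          (Equiv.sumCongr (Equiv.refl _) ((Equiv.prodComm _ _).trans
            (Equiv.prodUnique (Fin 4) (Fin 1)))))) _
      (Sum.elim
        (fun p : Fin j × Fin 4 =>
          ![1, a ((p.1:ℕ) + 2), ∏ t ∈ Finset.Icc 1 ((p.1:ℕ)+1), a t,
            ∏ t ∈ Finset.Icc 1 ((p.1:ℕ)+2), a t] p.2)
        (fun s : Fin 4 =>
          ![1, a (j + 2), ∏ t ∈ Finset.Icc 1 (j+1), a t,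
            ∏ t ∈ Finset.Icc 1 (j+2), a t] s)) ?_) (wss_sum_split _)
  rintro ⟨p1, s⟩
  induction p1 using Fin.lastCases with
  | last =>
      simp [finSumFinEquiv_symm_last]
  | cast q =>
      rw [show Fin.castSucc q = Fin.castAdd 1 q from rfl]
      simp [finSumFinEquiv_symm_apply_castAdd]

private theorem core_ind (h2 : (2:K) ≠ 0) {i : K} (hi : i ^ 2 = -1) (a : ℕ → K) (n : ℕ)
    (ha : ∀ t, 1 ≤ t → t ≤ n → a t ≠ 0) :
    ∀ j : ℕ, 1 ≤ j → j + 2 ≤ n →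
    QuadraticMap.Equivalent
      (weightedSumSquares K (fun p : Fin j × Fin 4 =>
        ![1, a ((p.1:ℕ) + 2), ∏ t ∈ Finset.Icc 1 ((p.1:ℕ)+1), a t,
          ∏ t ∈ Finset.Icc 1 ((p.1:ℕ)+2), a t] p.2))
      (dform (List.ofFn (fun t : Fin (j+1) => a ((t:ℕ)+1)) ++
        (∏ t ∈ Finset.Icc 1 (j+1), a t) :: List.replicate (3*j-2) (1:K))) := by
  have hane : ∀ k, k ≤ n → (∏ t ∈ Finset.Icc 1 k, a t) ≠ 0 := by
    intro k hk
    refine Finset.prod_ne_zero_iff.mpr fun t ht => ?_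
    rw [Finset.mem_Icc] at ht
    exact ha t ht.1 (le_trans ht.2 hk)
  intro j hj
  induction j, hj using Nat.le_induction with
  | base =>
      intro hn3
      have hlist : List.ofFn (fun t : Fin (1+1) => a ((t:ℕ)+1)) ++
          (∏ t ∈ Finset.Icc 1 (1+1), a t) :: List.replicate (3*1-2) (1:K)
          = [a 1, a 2, ∏ t ∈ Finset.Icc 1 2, a t, 1] := by
        simp [List.ofFn_succ]
      rw [hlist]
      refine wss_reindex ((Equiv.prodComm _ _).trans (Equiv.prodUnique (Fin 4) (Fin 1))
          |>.trans ⟨(![3,1,0,2] : Fin 4 → Fin 4), (![2,1,3,0] : Fin 4 → Fin 4),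
            by decide, by decide⟩) _ _ ?_
      rintro ⟨p1, s⟩
      have hp1 : (p1 : ℕ) = 0 := by omega
      fin_cases s <;> simp [hp1, Finset.Icc_self] <;> rfl
  | succ j hj ih =>
      intro hjn
      have ihe := ih (by omega)
      refine (wss_block_split a j).trans ?_
      have hblk : QuadraticMap.Equivalent
          (weightedSumSquares K (fun s : Fin 4 =>
            ![1, a (j + 2), ∏ t ∈ Finset.Icc 1 (j+1), a t,
              ∏ t ∈ Finset.Icc 1 (j+2), a t] s))
          (dform [(1:K), a (j + 2), ∏ t ∈ Finset.Icc 1 (j+1), a t,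
              ∏ t ∈ Finset.Icc 1 (j+2), a t]) :=
        wss_reindex (Equiv.refl _) _ _ (fun s => by fin_cases s <;> rfl)
      refine (ihe.prod hblk).trans ?_
      refine (dform_append _ _).symm.trans ?_
      have perm1 : ((List.ofFn (fun t : Fin (j+1) => a ((t:ℕ)+1)) ++
          (∏ t ∈ Finset.Icc 1 (j+1), a t) :: List.replicate (3*j-2) (1:K)) ++
            [(1:K), a (j + 2), ∏ t ∈ Finset.Icc 1 (j+1), a t,
              ∏ t ∈ Finset.Icc 1 (j+2), a t]).Perm
          ((∏ t ∈ Finset.Icc 1 (j+1), a t) :: (∏ t ∈ Finset.Icc 1 (j+1), a t) ::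
            (List.ofFn (fun t : Fin (j+1) => a ((t:ℕ)+1)) ++ a (j+2) ::
              (∏ t ∈ Finset.Icc 1 (j+2), a t) :: (1:K) :: List.replicate (3*j-2) (1:K))) := by
        refine Multiset.coe_eq_coe.mp ?_
        simp only [← Multiset.coe_add, ← Multiset.cons_coe, ← Multiset.singleton_add]
        abel
      refine (dform_perm perm1).trans ?_
      refine (dform_pair_cons h2 hi (hane (j+1) (by omega)) _).trans ?_
      rw [ofFnA_succ a (j+1), show (3*(j+1)-2) = (3*j-2)+1+1+1 from by omega,
        List.replicate_succ, List.replicate_succ, List.replicate_succ]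
      refine dform_perm ?_
      refine Multiset.coe_eq_coe.mp ?_
      simp only [← Multiset.coe_add, ← Multiset.cons_coe, ← Multiset.singleton_add]
      abel

end Core

/-- Let `K` be a field of characteristic `≠ 2` containing a square root of `−1`, `n ≥ 2`
even, and `a₁, …, a_n ∈ Kˣ` with `a₁⋯a_n = 1` up to squares. Then `⟨a₁, …, a_n⟩` is
Witt-equivalent to the sum of the `n − 2` two-fold Pfister forms
`⟨⟨a_i, a₁a₂⋯a_{i−1}⟩⟩ = ⟨1, −a_i, −a₁⋯a_{i−1}, a_i·a₁⋯a_{i−1}⟩` for `i = 2, …, n−1`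
(Witt equivalence being expressed by adding hyperbolic forms `⟨1,−1,…⟩` on both sides). -/
theorem stmt8 {K : Type*} [Field K] (h2 : (2 : K) ≠ 0) (hi : ∃ i : K, i ^ 2 = -1)
    (n : ℕ) (hn : Even n) (hn2 : 2 ≤ n)
    (a : ℕ → K) (ha : ∀ i, 1 ≤ i → i ≤ n → a i ≠ 0)
    (hprod : ∃ c : K, c ≠ 0 ∧ ∏ i ∈ Finset.Icc 1 n, a i = c ^ 2) :
    ∃ m m' : ℕ,
      QuadraticMap.Equivalent
        ((QuadraticMap.weightedSumSquares K (fun i : Fin n => a ((i : ℕ) + 1))).prod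
          (QuadraticMap.weightedSumSquares K
            (fun i : Fin (2 * m) => ((-1 : K) ^ (i : ℕ)))))
        ((QuadraticMap.weightedSumSquares K
            (fun p : Fin (n - 2) × Fin 4 =>
              ![1, -a ((p.1 : ℕ) + 2),
                -(∏ t ∈ Finset.Icc 1 ((p.1 : ℕ) + 1), a t),
                a ((p.1 : ℕ) + 2) * ∏ t ∈ Finset.Icc 1 ((p.1 : ℕ) + 1), a t] p.2)).prod
          (QuadraticMap.weightedSumSquares K
            (fun i : Fin (2 * m') => ((-1 : K) ^ (i : ℕ))))) := by
  obtain ⟨i, hi⟩ := hi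
  obtain ⟨c, hc0, hcsq⟩ := hprod
  have hine : i ≠ 0 := by
    rintro rfl
    rw [zero_pow (by norm_num)] at hi
    exact one_ne_zero (neg_eq_zero.mp hi.symm)
  obtain ⟨N, rfl⟩ : ∃ N, n = N + 2 := ⟨n - 2, by omega⟩
  by_cases hN : N = 0
  · subst hN
    refine ⟨3, 4, ?_⟩
    -- LHS ≅ dform (rep 8 1)
    have hprod2 : a 1 * a 2 = c ^ 2 := by
      rw [← hcsq, show (0+2 : ℕ) = 1 + 1 from rfl, Finset.prod_Icc_succ_top (by omega),
        Finset.Icc_self, Finset.prod_singleton]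
    have ha1 : a 1 ≠ 0 := ha 1 (by omega) (by omega)
    have hlist : List.ofFn (fun t : Fin (0+2) => a ((t:ℕ)+1)) = [a 1, a 2] := by
      simp [List.ofFn_succ]
    have lhs1 : QuadraticMap.Equivalent
        ((weightedSumSquares K (fun i : Fin (0+2) => a ((i : ℕ) + 1))).prod
          (weightedSumSquares K (fun i : Fin (2*3) => ((-1 : K) ^ (i : ℕ)))))
        (dform ([a 1, a 2] ++ List.replicate 6 (1:K))) := by
      refine QuadraticMap.Equivalent.trans ?_ (dform_append _ _).symm
      refine QuadraticMap.Equivalent.prod ?_ (wss_signs_dform hi 6)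
      exact (wss_ofFn_dform _).trans (by rw [hlist])
    have lhs2 : QuadraticMap.Equivalent (dform ([a 1, a 2] ++ List.replicate 6 (1:K)))
        (dform (List.replicate 8 (1:K))) := by
      have p1 : ([a 1, a 2] ++ List.replicate 6 (1:K)).Perm
          (a 2 :: a 1 :: List.replicate 6 (1:K)) := by
        refine Multiset.coe_eq_coe.mp ?_
        simp only [← Multiset.coe_add, ← Multiset.cons_coe, ← Multiset.singleton_add]
        abel
      refine (dform_perm p1).trans ?_
      have hsc : a 2 = (c / a 1) ^ 2 * a 1 := by
        field_simp
        linear_combination hprod2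
      refine QuadraticMap.Equivalent.trans
        ((dform_scale_head (div_ne_zero hc0 ha1) hsc _).symm) ?_
      refine (dform_pair_cons h2 hi ha1 _).trans ?_
      rw [show List.replicate 8 (1:K) = 1 :: 1 :: List.replicate 6 (1:K) from rfl]
    refine (lhs1.trans lhs2).trans ?_
    refine QuadraticMap.Equivalent.symm ?_
    haveI : IsEmpty (Fin (0+2-2) × Fin 4) :=
      ⟨fun p => by simpa using p.1.isLt⟩
    exact (wss_empty_prod _ _).trans (wss_signs_dform hi 8)
  · -- main case : N ≥ 1
    obtain ⟨k, hk⟩ := hn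
    refine ⟨3 * k, 4, ?_⟩
    have hN1 : 1 ≤ N := by omega
    have h2m : 2 * (3 * k) = 3 * N + 6 := by omega
    -- normalize signs of the Pfister blocks
    have hsigns : QuadraticMap.Equivalent
        (weightedSumSquares K
          (fun p : Fin N × Fin 4 =>
            ![1, -a ((p.1 : ℕ) + 2), -(∏ t ∈ Finset.Icc 1 ((p.1:ℕ)+1), a t),
              a ((p.1 : ℕ) + 2) * ∏ t ∈ Finset.Icc 1 ((p.1:ℕ)+1), a t] p.2))
        (weightedSumSquares K
          (fun p : Fin N × Fin 4 =>
            ![1, a ((p.1 : ℕ) + 2), ∏ t ∈ Finset.Icc 1 ((p.1:ℕ)+1), a t,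
              ∏ t ∈ Finset.Icc 1 ((p.1:ℕ)+2), a t] p.2)) := by
      refine wss_scale _ _ (fun p => ![1, i, i, 1] p.2) ?_ ?_
      · rintro ⟨p1, s⟩
        fin_cases s <;> simp [hine]
      · rintro ⟨p1, s⟩
        fin_cases s <;>
          simp [hi, Finset.prod_Icc_succ_top (show 1 ≤ (p1:ℕ) + 2 from by omega), mul_comm]
    have core := core_ind h2 hi a (N+2) ha N hN1 (by omega)
    -- RHS chain
    have hXrep : List.replicate (3*N+6) (1:K)
        = List.replicate (3*N-2) (1:K) ++ List.replicate 8 (1:K) := by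
      rw [← List.replicate_add]
      congr 1
      omega
    have rhs1 : QuadraticMap.Equivalent
        ((weightedSumSquares K
          (fun p : Fin N × Fin 4 =>
            ![1, -a ((p.1 : ℕ) + 2), -(∏ t ∈ Finset.Icc 1 ((p.1:ℕ)+1), a t),
              a ((p.1 : ℕ) + 2) * ∏ t ∈ Finset.Icc 1 ((p.1:ℕ)+1), a t] p.2)).prod
          (weightedSumSquares K (fun i : Fin (2*4) => ((-1 : K) ^ (i : ℕ)))))
        (dform ((List.ofFn (fun t : Fin (N+1) => a ((t:ℕ)+1)) ++
          (∏ t ∈ Finset.Icc 1 (N+1), a t) :: List.replicate (3*N-2) (1:K)) ++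
            List.replicate 8 (1:K))) :=
      ((hsigns.trans core).prod (wss_signs_dform hi 8)).trans (dform_append _ _).symm
    have perm2 : ((List.ofFn (fun t : Fin (N+1) => a ((t:ℕ)+1)) ++
          (∏ t ∈ Finset.Icc 1 (N+1), a t) :: List.replicate (3*N-2) (1:K)) ++
            List.replicate 8 (1:K)).Perm
        ((∏ t ∈ Finset.Icc 1 (N+1), a t) ::
          (List.ofFn (fun t : Fin (N+1) => a ((t:ℕ)+1)) ++ List.replicate (3*N+6) (1:K))) := by
      rw [hXrep]
      refine Multiset.coe_eq_coe.mp ?_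
      simp only [← Multiset.coe_add, ← Multiset.cons_coe, ← Multiset.singleton_add]
      abel
    have haN2 : a (N+2) ≠ 0 := ha (N+2) (by omega) (by omega)
    have hscale : ∏ t ∈ Finset.Icc 1 (N+1), a t = (c / a (N+2)) ^ 2 * a (N+2) := by
      have : (∏ t ∈ Finset.Icc 1 (N+1), a t) * a (N+2) = c ^ 2 := by
        rw [← hcsq]
        exact (Finset.prod_Icc_succ_top (by omega) a).symm
      field_simp
      linear_combination this
    have perm3 : (a (N+2) ::
          (List.ofFn (fun t : Fin (N+1) => a ((t:ℕ)+1)) ++ List.replicate (3*N+6) (1:K))).Perm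
        (List.ofFn (fun t : Fin (N+2) => a ((t:ℕ)+1)) ++ List.replicate (3*N+6) (1:K)) := by
      rw [ofFnA_succ a (N+1)]
      refine Multiset.coe_eq_coe.mp ?_
      simp only [← Multiset.coe_add, ← Multiset.cons_coe, ← Multiset.singleton_add]
      abel
    have rhs : QuadraticMap.Equivalent
        ((weightedSumSquares K
          (fun p : Fin N × Fin 4 =>
            ![1, -a ((p.1 : ℕ) + 2), -(∏ t ∈ Finset.Icc 1 ((p.1:ℕ)+1), a t),
              a ((p.1 : ℕ) + 2) * ∏ t ∈ Finset.Icc 1 ((p.1:ℕ)+1), a t] p.2)).prod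
          (weightedSumSquares K (fun i : Fin (2*4) => ((-1 : K) ^ (i : ℕ)))))
        (dform (List.ofFn (fun t : Fin (N+2) => a ((t:ℕ)+1)) ++ List.replicate (3*N+6) (1:K))) :=
      ((rhs1.trans (dform_perm perm2)).trans
        ((dform_scale_head (div_ne_zero hc0 haN2) hscale _).symm)).trans (dform_perm perm3)
    -- LHS chain
    have hlrep : List.replicate (2*(3*k)) (1:K) = List.replicate (3*N+6) (1:K) := by rw [h2m]
    have lhs : QuadraticMap.Equivalent
        ((weightedSumSquares K (fun i : Fin (N+2) => a ((i : ℕ) + 1))).prod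
          (weightedSumSquares K (fun i : Fin (2*(3*k)) => ((-1 : K) ^ (i : ℕ)))))
        (dform (List.ofFn (fun t : Fin (N+2) => a ((t:ℕ)+1)) ++ List.replicate (3*N+6) (1:K))) := by
      refine QuadraticMap.Equivalent.trans ?_ (dform_append _ _).symm
      refine QuadraticMap.Equivalent.prod (wss_ofFn_dform _) ?_
      exact (wss_signs_dform hi _).trans (by rw [hlrep])
    exact lhs.trans rhs.symm
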